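/- Let 1 ≤ p < ∞, 0 ≤ λ < 1, let H be the finite Hilbert transform on (-1,1), and let u, v be nonnegative weights on (-1,1) such that ‖u·Hg‖_{p,λ} ≤ C ‖v·g‖_{p,λ} for every g with v·g ∈ 𝓛^{p,λ}(-1,1). Then for all r, s ∈ (-1,1) with r ≤ s and every f with v·f ∈ 𝓛^{p,λ}(-1,1), one has ( ∫_{-1}^{r} |f(t)|/(s-t) dt ) · ‖u·χ_{(r,s)}‖_{p,λ} ≤ C ‖v·f·χ_{(-1,r)}‖_{p,λ}, with the same constant C. -/

import Mathlib

open MeasureTheory Set Filter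
open scoped ENNReal

noncomputable section

/-- Generalized binomial coefficient `C(z, k) = z(z-1)⋯(z-k+1)/k!`. -/
def genBinom (z : ℝ) (k : ℕ) : ℝ :=
  (∏ i ∈ Finset.range k, (z - i)) / (Nat.factorial k)

/-- The classical Jacobi polynomial `P_n^{(a,b)}(x)`
(Szegő (4.3.2)); it satisfies `P_n^{(a,b)}(1) = binom(n+a, n)`. -/
def jacobiP (a b : ℝ) (n : ℕ) (x : ℝ) : ℝ :=
  ∑ ν ∈ Finset.range (n + 1),
    genBinom (n + a) (n - ν) * genBinom (n + b) ν *
      ((x - 1) / 2) ^ ν * ((x + 1) / 2) ^ (n - ν)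

/-- The normalizing constant
`d_n^{(a,b)} = (∫_{-1}^1 (P_n^{(a,b)}(x))² (1-x)^a (1+x)^b dx)^{-1/2}`. -/
def jacobiD (a b : ℝ) (n : ℕ) : ℝ :=
  (∫ x in Set.Ioo (-1 : ℝ) 1,
      (jacobiP a b n x) ^ 2 * (1 - x) ^ a * (1 + x) ^ b) ^ (-(1 : ℝ) / 2)

/-- The Jacobi function `p_n^{(a,b)}(x) = d_n^{(a,b)} P_n^{(a,b)}(x) (1-x)^{a/2} (1+x)^{b/2}`. -/
def jacobiFun (a b : ℝ) (n : ℕ) (x : ℝ) : ℝ :=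
  jacobiD a b n * jacobiP a b n x * (1 - x) ^ (a / 2) * (1 + x) ^ (b / 2)

/-- The Fourier–Jacobi coefficient `a_k^{(a,b)}(f) = ∫_{-1}^1 p_k^{(a,b)}(t) f(t) dt`. -/
def fourierJacobiCoeff (a b : ℝ) (k : ℕ) (f : ℝ → ℝ) : ℝ :=
  ∫ t in Set.Ioo (-1 : ℝ) 1, jacobiFun a b k t * f t

/-- The partial sum `S_n f = ∑_{k=0}^n a_k^{(a,b)}(f) p_k^{(a,b)}`. -/
def jacobiPartialSum (a b : ℝ) (n : ℕ) (f : ℝ → ℝ) (x : ℝ) : ℝ :=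
  ∑ k ∈ Finset.range (n + 1), fourierJacobiCoeff a b k f * jacobiFun a b k x

/-- The Morrey norm
`‖f‖_{p,λ} = sup_{x∈(-1,1), r>0} ( r^{-λ} ∫_{B(x,r)} |f(t)|^p dt )^{1/p}`,
where `B(x,r) = {t ∈ (-1,1) : |t-x| ≤ r}`, computed in `ℝ≥0∞`. -/
def morreyNorm (p lam : ℝ) (f : ℝ → ℝ) : ℝ≥0∞ :=
  ⨆ (x : ℝ) (_ : x ∈ Set.Ioo (-1 : ℝ) 1) (r : ℝ) (_ : 0 < r),
    (ENNReal.ofReal (r ^ (-lam)) *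
      ∫⁻ t in {t : ℝ | t ∈ Set.Ioo (-1 : ℝ) 1 ∧ |t - x| ≤ r},
        ENNReal.ofReal (|f t| ^ p)) ^ (1 / p)

/-- Membership in the Morrey space `𝓛^{p,λ}(-1,1)`:
measurable functions with finite Morrey norm. -/
def MemMorrey (p lam : ℝ) (f : ℝ → ℝ) : Prop :=
  Measurable f ∧ morreyNorm p lam f < ⊤

/-- The finite Hilbert transform `H f(x) = p.v. ∫_{-1}^1 f(t)/(x-t) dt` on `(-1,1)`. -/
def finiteHilbert (f : ℝ → ℝ) (x : ℝ) : ℝ :=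
  limUnder (nhdsWithin (0 : ℝ) (Set.Ioi 0)) fun ε =>
    ∫ t in {t : ℝ | t ∈ Set.Ioo (-1 : ℝ) 1 ∧ ε ≤ |x - t|}, f t / (x - t)

/-- The dual-type quantity
`‖g‖*_{q,λ} = inf_{x∈(-1,1)} ∫_0^∞ r^{λ/p−1} ‖χ_{(B(x,r))^c} g‖_{L^q(-1,1)} dr`. -/
def starNorm (p lam q : ℝ) (g : ℝ → ℝ) : ℝ≥0∞ :=
  ⨅ (x : ℝ) (_ : x ∈ Set.Ioo (-1 : ℝ) 1),
    ∫⁻ r in Set.Ioi (0 : ℝ),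
      ENNReal.ofReal (r ^ (lam / p - 1)) *
        (∫⁻ t in {t : ℝ | t ∈ Set.Ioo (-1 : ℝ) 1 ∧ r < |t - x|},
          ENNReal.ofReal (|g t| ^ q)) ^ (1 / q)

/-- The `L^p(-1,1)` norm (in `ℝ≥0∞`). -/
def lpNorm (p : ℝ) (g : ℝ → ℝ) : ℝ≥0∞ :=
  (∫⁻ t in Set.Ioo (-1 : ℝ) 1, ENNReal.ofReal (|g t| ^ p)) ^ (1 / p)


lemma morreyNorm_mono_ae (p lam : ℝ) (f₁ f₂ : ℝ → ℝ) (hp : 0 < p)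
    (h : ∀ᵐ t : ℝ, |f₁ t| ≤ |f₂ t|) :
    morreyNorm p lam f₁ ≤ morreyNorm p lam f₂ := by
  unfold morreyNorm
  refine iSup_mono fun x => iSup_mono fun hx => iSup_mono fun r => iSup_mono fun hr => ?_
  refine ENNReal.rpow_le_rpow (mul_le_mul_right ?_ _) (by positivity)
  refine lintegral_mono_ae (ae_restrict_of_ae ?_)
  filter_upwards [h] with t ht
  exact ENNReal.ofReal_le_ofReal (Real.rpow_le_rpow (abs_nonneg _) ht hp.le)

lemma morreyNorm_const_mul_le (p lam c : ℝ) (h : ℝ → ℝ) (hp : 0 < p) (hc : 0 ≤ c) :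
    ENNReal.ofReal c * morreyNorm p lam h ≤ morreyNorm p lam (fun x => c * h x) := by
  have hkey : ∀ X : ℝ≥0∞, ENNReal.ofReal c * X ^ (1 / p)
      = (ENNReal.ofReal (c ^ p) * X) ^ (1 / p) := by
    intro X
    rw [ENNReal.mul_rpow_of_nonneg _ _ (by positivity),
      ENNReal.ofReal_rpow_of_nonneg (Real.rpow_nonneg hc p) (by positivity),
      ← Real.rpow_mul hc, mul_one_div_cancel hp.ne', Real.rpow_one]
  unfold morreyNorm
  simp only [ENNReal.mul_iSup]
  refine iSup_mono fun x => iSup_mono fun hx => iSup_mono fun r => iSup_mono fun hr => ?_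
  rw [hkey, mul_left_comm]
  refine ENNReal.rpow_le_rpow (mul_le_mul_right ?_ _) (by positivity)
  rw [← lintegral_const_mul' _ _ ENNReal.ofReal_ne_top]
  refine lintegral_mono fun t => ?_
  rw [abs_mul, abs_of_nonneg hc, Real.mul_rpow hc (abs_nonneg _),
    ENNReal.ofReal_mul (by positivity)]

set_option maxHeartbeats 1000000 in
/-- If the finite Hilbert transform satisfies a two-weight Morrey
bound `‖u·Hg‖_{p,λ} ≤ C ‖v·g‖_{p,λ}`, then for `r ≤ s` in `(-1,1)` one has
`(∫_{-1}^r |f(t)|/(s-t) dt) ‖u·χ_{(r,s)}‖_{p,λ} ≤ C ‖v·f·χ_{(-1,r)}‖_{p,λ}`,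
with the same constant `C`. -/
theorem hilbert_weights_testing (p lam : ℝ) (u v : ℝ → ℝ) (C : ℝ)
    (hp : 1 ≤ p) (hlam0 : 0 ≤ lam) (hlam1 : lam < 1) (hC : 0 ≤ C)
    (hu : ∀ x, 0 ≤ u x) (hv : ∀ x, 0 ≤ v x)
    (hbound : ∀ g : ℝ → ℝ, MemMorrey p lam (fun x => v x * g x) →
      morreyNorm p lam (fun x => u x * finiteHilbert g x) ≤
        ENNReal.ofReal C * morreyNorm p lam (fun x => v x * g x)) :
    ∀ r s : ℝ, r ∈ Set.Ioo (-1 : ℝ) 1 → s ∈ Set.Ioo (-1 : ℝ) 1 → r ≤ s →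
      ∀ f : ℝ → ℝ, MemMorrey p lam (fun x => v x * f x) →
        ENNReal.ofReal (∫ t in Set.Ioo (-1 : ℝ) r, |f t| / (s - t)) *
            morreyNorm p lam (fun x => u x * Set.indicator (Set.Ioo r s) 1 x) ≤
          ENNReal.ofReal C *
            morreyNorm p lam
              (fun x => v x * f x * Set.indicator (Set.Ioo (-1 : ℝ) r) 1 x) := by
  intro r s hr hs hrs f hf
  by_cases hInt : IntegrableOn (fun t => |f t| / (s - t)) (Set.Ioo (-1 : ℝ) r) volume
  swap
  · rw [integral_undef hInt]; simp
  have hp0 : 0 < p := lt_of_lt_of_le one_pos hp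
  set A := ∫ t in Set.Ioo (-1 : ℝ) r, |f t| / (s - t) with hA
  have hsub : ∀ t ∈ Set.Ioo (-1 : ℝ) r, 0 < s - t := fun t ht => by
    have := ht.2; linarith
  have hA0 : 0 ≤ A :=
    setIntegral_nonneg measurableSet_Ioo fun t ht =>
      div_nonneg (abs_nonneg _) (hsub t ht).le
  -- integrability of |f| on (-1, r)
  have habs : IntegrableOn (fun t => |f t|) (Set.Ioo (-1 : ℝ) r) := by
    have hm : AEStronglyMeasurable (fun t => |f t|)
        (volume.restrict (Set.Ioo (-1 : ℝ) r)) := by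
      have h0 : AEStronglyMeasurable (fun t => (s - t) * (|f t| / (s - t)))
          (volume.restrict (Set.Ioo (-1 : ℝ) r)) :=
        ((continuous_const.sub continuous_id).aestronglyMeasurable).mul hInt.1
      refine h0.congr ?_
      filter_upwards [ae_restrict_mem measurableSet_Ioo] with t ht
      rw [mul_comm, div_mul_cancel₀ _ (hsub t ht).ne']
    refine Integrable.mono' (hInt.const_mul 2) hm ?_
    filter_upwards [ae_restrict_mem measurableSet_Ioo] with t ht
    rw [Real.norm_eq_abs, abs_abs]
    have h1 : 0 < s - t := hsub t ht
    have h2 : s - t ≤ 2 := by have := hs.2; have := ht.1; linarith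
    rw [mul_div_assoc', le_div_iff₀ h1]
    nlinarith [abs_nonneg (f t)]
  -- the test function
  set g : ℝ → ℝ := fun t => Set.indicator (Set.Ioo (-1 : ℝ) r) (fun t => |f t|) t with hg
  have hvg_eq : ∀ x, v x * g x = |v x * f x| * Set.indicator (Set.Ioo (-1 : ℝ) r) 1 x := by
    intro x
    by_cases hx : x ∈ Set.Ioo (-1 : ℝ) r
    · simp [hg, Set.indicator_of_mem hx, abs_mul, abs_of_nonneg (hv x)]
    · simp [hg, Set.indicator_of_notMem hx]
  have habs_eq : ∀ x, |v x * g x| = |v x * f x * Set.indicator (Set.Ioo (-1 : ℝ) r) 1 x| := by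
    intro x
    rw [hvg_eq x, abs_mul, abs_abs, ← abs_mul]
  have hM1 : morreyNorm p lam (fun x => v x * g x)
      = morreyNorm p lam (fun x => v x * f x * Set.indicator (Set.Ioo (-1 : ℝ) r) 1 x) :=
    le_antisymm
      (morreyNorm_mono_ae p lam _ _ hp0 (Filter.Eventually.of_forall fun x => (habs_eq x).le))
      (morreyNorm_mono_ae p lam _ _ hp0 (Filter.Eventually.of_forall fun x => (habs_eq x).ge))
  have hmeas_vg : Measurable fun x => v x * g x := by
    have : (fun x => v x * g x)
        = fun x => |v x * f x| * Set.indicator (Set.Ioo (-1 : ℝ) r) 1 x := funext hvg_eq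
    rw [this]
    exact hf.1.abs.mul (measurable_one.indicator measurableSet_Ioo)
  have hfin : morreyNorm p lam (fun x => v x * g x) < ⊤ := by
    refine lt_of_le_of_lt (morreyNorm_mono_ae p lam _ _ hp0
      (Filter.Eventually.of_forall fun x => ?_)) hf.2
    rw [habs_eq x, abs_mul]
    refine mul_le_of_le_one_right (abs_nonneg _) ?_
    by_cases hx : x ∈ Set.Ioo (-1 : ℝ) r
    · simp [Set.indicator_of_mem hx]
    · simp [Set.indicator_of_notMem hx]
  -- compute the finite Hilbert transform of g on (r, s)
  have hHg : ∀ x ∈ Set.Ioo r s,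
      finiteHilbert g x = ∫ t in Set.Ioo (-1 : ℝ) r, |f t| / (x - t) := by
    intro x hx
    have hxr : 0 < x - r := by have := hx.1; linarith
    have hconst : ∀ ε : ℝ, 0 < ε → ε ≤ x - r →
        (∫ t in {t : ℝ | t ∈ Set.Ioo (-1 : ℝ) 1 ∧ ε ≤ |x - t|}, g t / (x - t))
          = ∫ t in Set.Ioo (-1 : ℝ) r, |f t| / (x - t) := by
      intro ε hε1 hε2
      have heq : (fun t => g t / (x - t))
          = Set.indicator (Set.Ioo (-1 : ℝ) r) (fun t => |f t| / (x - t)) := by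
        funext t
        by_cases ht : t ∈ Set.Ioo (-1 : ℝ) r
        · simp [hg, Set.indicator_of_mem ht]
        · simp [hg, Set.indicator_of_notMem ht]
      rw [heq, setIntegral_indicator measurableSet_Ioo]
      have hss : {t : ℝ | t ∈ Set.Ioo (-1 : ℝ) 1 ∧ ε ≤ |x - t|} ∩ Set.Ioo (-1 : ℝ) r
          = Set.Ioo (-1 : ℝ) r := by
        refine Set.inter_eq_self_of_subset_right fun t ht => ?_
        refine ⟨⟨ht.1, lt_trans ht.2 hr.2⟩, ?_⟩
        have h3 : 0 < x - t := by have := ht.2; linarith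
        rw [abs_of_pos h3]
        have := ht.2; linarith
      rw [hss]
    unfold finiteHilbert
    refine Filter.Tendsto.limUnder_eq ?_
    refine Filter.Tendsto.congr' ?_ tendsto_const_nhds
    filter_upwards [self_mem_nhdsWithin,
      mem_nhdsWithin_of_mem_nhds (Iio_mem_nhds hxr)] with ε hε1 hε2
    exact (hconst ε hε1 (le_of_lt hε2)).symm
  have hBA : ∀ x ∈ Set.Ioo r s, A ≤ ∫ t in Set.Ioo (-1 : ℝ) r, |f t| / (x - t) := by
    intro x hx
    have hxr : 0 < x - r := by have := hx.1; linarith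
    have hIntx : IntegrableOn (fun t => |f t| / (x - t)) (Set.Ioo (-1 : ℝ) r) := by
      refine Integrable.mono' (habs.const_mul (x - r)⁻¹) ?_ ?_
      · have h1 : AEStronglyMeasurable (fun t : ℝ => (x - t)⁻¹)
            (volume.restrict (Set.Ioo (-1 : ℝ) r)) :=
          ((measurable_id.const_sub x).inv).aestronglyMeasurable
        simpa [div_eq_mul_inv, Pi.mul_def] using habs.1.mul h1
      · filter_upwards [ae_restrict_mem measurableSet_Ioo] with t ht
        have h3 : 0 < x - t := by have := ht.2; linarith
        have h4 : x - r ≤ x - t := by have := ht.2; linarith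
        rw [Real.norm_eq_abs, abs_of_nonneg (div_nonneg (abs_nonneg _) h3.le),
          mul_comm, ← div_eq_mul_inv]
        gcongr
    refine setIntegral_mono_on hInt hIntx measurableSet_Ioo fun t ht => ?_
    have h3 : 0 < x - t := by have := ht.2; have := hx.1; linarith
    have h4 : x - t ≤ s - t := by have := hx.2; linarith
    gcongr
  -- assemble
  calc ENNReal.ofReal A *
        morreyNorm p lam (fun x => u x * Set.indicator (Set.Ioo r s) 1 x)
      ≤ morreyNorm p lam (fun x => A * (u x * Set.indicator (Set.Ioo r s) 1 x)) :=
        morreyNorm_const_mul_le p lam A _ hp0 hA0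
    _ ≤ morreyNorm p lam (fun x => u x * finiteHilbert g x) := by
        refine morreyNorm_mono_ae p lam _ _ hp0 (Filter.Eventually.of_forall fun x => ?_)
        by_cases hx : x ∈ Set.Ioo r s
        · simp only [Set.indicator_of_mem hx, Pi.one_apply, mul_one]
          rw [hHg x hx]
          have hB := hBA x hx
          have hB0 : 0 ≤ ∫ t in Set.Ioo (-1 : ℝ) r, |f t| / (x - t) := le_trans hA0 hB
          rw [abs_of_nonneg (mul_nonneg hA0 (hu x)),
            abs_of_nonneg (mul_nonneg (hu x) hB0), mul_comm (u x)]
          exact mul_le_mul_of_nonneg_right hB (hu x)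
        · rw [Set.indicator_of_notMem hx]
          simp [abs_nonneg]
          exact mul_nonneg (abs_nonneg _) (abs_nonneg _)
    _ ≤ ENNReal.ofReal C * morreyNorm p lam (fun x => v x * g x) :=
        hbound g ⟨hmeas_vg, hfin⟩
    _ = ENNReal.ofReal C *
        morreyNorm p lam
          (fun x => v x * f x * Set.indicator (Set.Ioo (-1 : ℝ) r) 1 x) := by rw [hM1]

end
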